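/- Let N be a positive integer and let ν be a real number with U'_{N+1}(ν) = 0, where U' denotes the derivative. Let Z(ν) ∈ ℝ^N be the vector with k-th coordinate z_k(ν) = (−1)^{k−1}( U_{k−1}(ν)U_k(ν) − U_{N−k}(ν)U_{N−k+1}(ν) + ((N+1−2k)/(N+1)) U_N(ν)U_{N+1}(ν) ) for k = 1,…,N. Then (4ν²(I+A) − (I−B)) Z(ν) = 0; i.e., Z(ν) is a principal vector of the matrix pencil I+A − λ(I−B) for the characteristic number λ = 1/(4ν²) (when ν ≠ 0). -/

import Mathlib

open Polynomial Chebyshev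

/-- Evaluation of the Chebyshev polynomial of the second kind. -/
noncomputable def Ucheb (n : ℤ) (x : ℝ) : ℝ := (Polynomial.Chebyshev.U ℝ n).eval x

/-- Evaluation of the derivative of the Chebyshev polynomial of the second kind. -/
noncomputable def Ucheb' (n : ℤ) (x : ℝ) : ℝ :=
  (Polynomial.derivative (Polynomial.Chebyshev.U ℝ n)).eval x

/-- The N×N matrix with entries 1/2 on the first off-diagonals and 0 elsewhere. -/
noncomputable def matA (N : ℕ) : Matrix (Fin N) (Fin N) ℝ :=
  fun i j => if ((i : ℤ) - (j : ℤ)).natAbs = 1 then 1/2 else 0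

/-- The N×N matrix with entries 1/2 on the second off-diagonals and 0 elsewhere. -/
noncomputable def matB (N : ℕ) : Matrix (Fin N) (Fin N) ℝ :=
  fun i j => if ((i : ℤ) - (j : ℤ)).natAbs = 2 then 1/2 else 0

/-- The k-th coordinate (1-based) of the vector Z(x). -/
noncomputable def zCoord (N k : ℕ) (x : ℝ) : ℝ :=
  (-1 : ℝ) ^ (k - 1) *
    (Ucheb ((k : ℤ) - 1) x * Ucheb (k : ℤ) x
      - Ucheb ((N : ℤ) - k) x * Ucheb ((N : ℤ) - k + 1) x
      + (((N : ℝ) + 1 - 2 * k) / ((N : ℝ) + 1)) * Ucheb (N : ℤ) x * Ucheb ((N : ℤ) + 1) x)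

/- ------------------ auxiliary machinery ------------------ -/

lemma Urec (x : ℝ) (a b c : ℤ) (h1 : a = c + 1) (h2 : b = c + 2) :
    Ucheb b x = 2 * x * Ucheb a x - Ucheb c x := by
  subst h1 h2
  unfold Ucheb
  rw [Polynomial.Chebyshev.U_add_two]
  simp [eval_sub, eval_mul, eval_ofNat]

lemma Urec' (x : ℝ) (a b c : ℤ) (h1 : a = c + 1) (h2 : b = c + 2) :
    Ucheb c x = 2 * x * Ucheb a x - Ucheb b x := by
  subst h1 h2
  linear_combination Urec x (c+1) (c+2) c rfl rfl

lemma Ucheb_neg_one (x : ℝ) : Ucheb (-1) x = 0 := by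
  unfold Ucheb; rw [Polynomial.Chebyshev.U_neg_one]; simp

/-- The unsigned coordinate function, defined for all integer indices. -/
noncomputable def yy (N : ℕ) (t : ℤ) (x : ℝ) : ℝ :=
  Ucheb (t - 1) x * Ucheb t x - Ucheb ((N : ℤ) - t) x * Ucheb ((N : ℤ) - t + 1) x
    + (((N : ℝ) + 1 - 2 * (t : ℝ)) / ((N : ℝ) + 1)) * Ucheb (N : ℤ) x * Ucheb ((N : ℤ) + 1) x

/-- The signed coordinate function, defined for all integer indices. -/
noncomputable def Zext (N : ℕ) (t : ℤ) (x : ℝ) : ℝ := (-1 : ℝ) ^ (t + 1) * yy N t x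

lemma Lzero (N : ℕ) (k : ℤ) (x : ℝ) :
    yy N (k+2) x + yy N (k-2) x - 4*x^2*(yy N (k+1) x + yy N (k-1) x)
      + (8*x^2 - 2) * yy N k x = 0 := by
  unfold yy
  push_cast
  simp only [show (k+2-1 : ℤ) = k+1 by ring, show (k-2-1 : ℤ) = k-3 by ring,
    show (k+1-1 : ℤ) = k by ring, show (k-1-1 : ℤ) = k-2 by ring,
    show ((N : ℤ)-(k+2)) = N-k-2 by ring, show ((N : ℤ)-k-2+1) = N-k-1 by ring,
    show ((N : ℤ)-(k-2)) = N-k+2 by ring, show ((N : ℤ)-k+2+1) = N-k+3 by ring,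
    show ((N : ℤ)-(k+1)) = N-k-1 by ring, show ((N : ℤ)-k-1+1) = N-k by ring,
    show ((N : ℤ)-(k-1)) = N-k+1 by ring, show ((N : ℤ)-k+1+1) = N-k+2 by ring]
  rw [Urec x (N-k+2) (N-k+3) (N-k+1) (by ring) (by ring),
      Urec x (N-k+1) (N-k+2) (N-k) (by ring) (by ring),
      Urec' x (N-k-1) (N-k) (N-k-2) (by ring) (by ring),
      Urec' x (N-k) (N-k+1) (N-k-1) (by ring) (by ring),
      Urec' x (k-2) (k-1) (k-3) (by ring) (by ring),
      Urec' x (k-1) k (k-2) (by ring) (by ring),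
      Urec x (k+1) (k+2) k (by ring) (by ring),
      Urec x k (k+1) (k-1) (by ring) (by ring)]
  ring

lemma sign_add_two (m : ℤ) : (-1 : ℝ) ^ (m + 2) = (-1 : ℝ) ^ m := by
  rw [zpow_add₀ (by norm_num : (-1:ℝ) ≠ 0)]; norm_num

lemma sign_add_one (m : ℤ) : (-1 : ℝ) ^ (m + 1) = -(-1 : ℝ) ^ m := by
  rw [zpow_add₀ (by norm_num : (-1:ℝ) ≠ 0)]; norm_num

lemma rowZero (N : ℕ) (k : ℤ) (x : ℝ) :
    (1/2) * Zext N (k-2) x + 2*x^2 * Zext N (k-1) x + (4*x^2 - 1) * Zext N k x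
      + 2*x^2 * Zext N (k+1) x + (1/2) * Zext N (k+2) x = 0 := by
  unfold Zext
  have h1 : (-1 : ℝ) ^ (k-2+1) = (-1 : ℝ) ^ (k+1) := by
    rw [show (k-2+1 : ℤ) = k-1 by ring, show (k+1 : ℤ) = (k-1) + 2 by ring, sign_add_two]
  have h2 : (-1 : ℝ) ^ (k-1+1) = -(-1 : ℝ) ^ (k+1) := by
    rw [show (k-1+1 : ℤ) = k by ring, sign_add_one]; ring
  have h3 : (-1 : ℝ) ^ (k+1+1) = -(-1 : ℝ) ^ (k+1) := sign_add_one (k+1)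
  have h4 : (-1 : ℝ) ^ (k+2+1) = (-1 : ℝ) ^ (k+1) := by
    rw [show (k+2+1 : ℤ) = (k+1) + 2 by ring, sign_add_two]
  rw [h1, h2, h3, h4]
  linear_combination ((-1 : ℝ) ^ (k+1) / 2) * Lzero N k x

lemma yy_zero (N : ℕ) (x : ℝ) : yy N 0 x = 0 := by
  have hN1 : ((N : ℝ) + 1) ≠ 0 := by positivity
  unfold yy
  rw [show ((0:ℤ) - 1) = -1 by ring, Ucheb_neg_one,
    show ((N:ℤ) - 0) = N by ring]
  push_cast
  field_simp
  ring

lemma yy_top (N : ℕ) (x : ℝ) : yy N ((N : ℤ) + 1) x = 0 := by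
  have hN1 : ((N : ℝ) + 1) ≠ 0 := by positivity
  unfold yy
  rw [show ((N:ℤ) + 1 - 1) = N by ring, show ((N:ℤ) - (N+1)) = -1 by ring, Ucheb_neg_one]
  push_cast
  field_simp
  ring

lemma deriv_rel (N : ℕ) (x : ℝ) (hd : Ucheb' ((N : ℤ) + 1) x = 0) :
    ((N : ℝ) + 2) * Ucheb (N : ℤ) x = ((N : ℝ) + 1) * x * Ucheb ((N : ℤ) + 1) x := by
  have h := Polynomial.Chebyshev.add_one_mul_T_eq_poly_in_U (R := ℝ) ((N : ℤ) + 1)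
  have h' := congrArg (Polynomial.eval x) h
  simp only [eval_mul, eval_add, eval_sub, eval_one, eval_X, eval_pow, eval_intCast] at h'
  rw [show ((((N : ℤ) + 1 : ℤ) : ℝ)) = (N : ℝ) + 1 by push_cast; ring] at h'
  have hd' : (Polynomial.derivative (Polynomial.Chebyshev.U ℝ ((N:ℤ)+1))).eval x = 0 := hd
  rw [hd'] at h'
  have hT := congrArg (Polynomial.eval x) (Polynomial.Chebyshev.T_eq_U_sub_X_mul_U ℝ ((N : ℤ) + 2))
  simp only [eval_sub, eval_mul, eval_X] at hT
  rw [show ((N : ℤ) + 2 - 1) = (N:ℤ) + 1 by ring] at hT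
  rw [show ((N : ℤ) + 1 + 1) = (N:ℤ) + 2 by ring, hT] at h'
  have hU2 : Ucheb ((N:ℤ)+2) x = 2 * x * Ucheb ((N:ℤ)+1) x - Ucheb (N:ℤ) x :=
    Urec x ((N:ℤ)+1) ((N:ℤ)+2) (N:ℤ) rfl rfl
  unfold Ucheb at hU2 ⊢
  linear_combination -h' + ((N:ℝ)+2) * hU2

lemma yy_neg_one (N : ℕ) (x : ℝ) (hrel : ((N : ℝ) + 2) * Ucheb (N : ℤ) x
    = ((N : ℝ) + 1) * x * Ucheb ((N : ℤ) + 1) x) : yy N (-1) x = 0 := by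
  have hN1 : ((N : ℝ) + 1) ≠ 0 := by positivity
  unfold yy
  rw [show ((-1 : ℤ) - 1) = -2 by ring,
    show ((N:ℤ) - -1) = N + 1 by ring, show ((N:ℤ) + 1 + 1) = N + 2 by ring,
    Urec x ((N:ℤ)+1) ((N:ℤ)+2) (N:ℤ) rfl rfl, Ucheb_neg_one]
  push_cast
  field_simp
  linear_combination (2 * Ucheb ((N:ℤ)+1) x) * hrel

lemma yy_top2 (N : ℕ) (x : ℝ) (hrel : ((N : ℝ) + 2) * Ucheb (N : ℤ) x
    = ((N : ℝ) + 1) * x * Ucheb ((N : ℤ) + 1) x) : yy N ((N : ℤ) + 2) x = 0 := by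
  have hN1 : ((N : ℝ) + 1) ≠ 0 := by positivity
  unfold yy
  rw [show ((N:ℤ) + 2 - 1) = N + 1 by ring, show ((N:ℤ) - (N + 2)) = -2 by ring,
    show ((-2 : ℤ) + 1) = -1 by ring, Ucheb_neg_one,
    Urec x ((N:ℤ)+1) ((N:ℤ)+2) (N:ℤ) rfl rfl]
  push_cast
  field_simp
  linear_combination (-2 * Ucheb ((N:ℤ)+1) x) * hrel

/-- The symbol of the pentadiagonal matrix. -/
noncomputable def mcoef (x : ℝ) (d : ℤ) : ℝ :=
  4 * x^2 * ((if d = 0 then 1 else 0) + (if d.natAbs = 1 then 1/2 else 0))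
    - ((if d = 0 then (1:ℝ) else 0) - (if d.natAbs = 2 then 1/2 else 0))

lemma zCoord_eq_Zext (N j : ℕ) (x : ℝ) : zCoord N (j+1) x = Zext N ((j:ℤ)+1) x := by
  unfold zCoord Zext yy
  rw [Nat.add_sub_cancel, show ((j:ℤ)+1+1) = (j:ℤ)+2 by ring, sign_add_two,
    zpow_natCast]
  push_cast
  ring

theorem stmt4 (N : ℕ) (hN : 0 < N) (ν : ℝ) (hν : Ucheb' (N + 1) ν = 0)
    (Z : Fin N → ℝ) (hZ : ∀ i : Fin N, Z i = zCoord N ((i : ℕ) + 1) ν) :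
    Matrix.mulVec ((4 * ν ^ 2) • ((1 : Matrix (Fin N) (Fin N) ℝ) + matA N)
        - ((1 : Matrix (Fin N) (Fin N) ℝ) - matB N)) Z = 0 := by
  have hrel := deriv_rel N ν (by exact_mod_cast hν)
  -- vanishing of the extended coordinates out of range
  have hZv : ∀ t : ℤ, (t = -1 ∨ t = 0 ∨ t = (N:ℤ)+1 ∨ t = (N:ℤ)+2) → Zext N t ν = 0 := by
    intro t ht
    unfold Zext
    rcases ht with h | h | h | h <;> subst h
    · rw [yy_neg_one N ν hrel]; ring
    · rw [yy_zero]; ring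
    · rw [yy_top]; ring
    · rw [yy_top2 N ν hrel]; ring
  funext i
  show ∑ j : Fin N, _ * Z j = 0
  have hterm : ∀ j : Fin N,
      (((4 * ν ^ 2) • ((1 : Matrix (Fin N) (Fin N) ℝ) + matA N)
        - ((1 : Matrix (Fin N) (Fin N) ℝ) - matB N)) i j) * Z j
      = mcoef ν ((i:ℤ) - (j:ℤ)) * Zext N ((j:ℤ)+1) ν := by
    intro j
    rw [hZ j, zCoord_eq_Zext]
    congr 1
    simp only [Matrix.sub_apply, Matrix.smul_apply, Matrix.add_apply, Matrix.one_apply,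
      matA, matB, mcoef, smul_eq_mul]
    have : (i = j) ↔ ((i:ℤ) - (j:ℤ) = 0) := by
      constructor
      · intro h; subst h; ring
      · intro h; exact Fin.ext (by omega)
    by_cases h : i = j
    · simp [h, if_pos (this.mp h)]
    · rw [if_neg h, if_neg (fun hc => h (this.mpr hc))]
  rw [Finset.sum_congr rfl (fun j _ => hterm j)]
  -- convert to a sum over an integer interval
  have e : Function.Injective (fun n : ℕ => (n:ℤ)+1) := by
    intro a b h; simpa using h
  have hmap : Finset.Icc (1:ℤ) (N:ℤ) = (Finset.range N).map ⟨fun n : ℕ => (n:ℤ)+1, e⟩ := by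
    ext t
    simp only [Finset.mem_Icc, Finset.mem_map, Finset.mem_range, Function.Embedding.coeFn_mk]
    constructor
    · intro ⟨h1, h2⟩; exact ⟨(t-1).toNat, by omega, by omega⟩
    · rintro ⟨n, hn, rfl⟩; omega
  have step1 : ∑ j : Fin N, mcoef ν ((i:ℤ) - (j:ℤ)) * Zext N ((j:ℤ)+1) ν
      = ∑ t ∈ Finset.Icc (1:ℤ) (N:ℤ), mcoef ν ((i:ℤ)+1 - t) * Zext N t ν := by
    rw [hmap, Finset.sum_map]
    rw [Fin.sum_univ_eq_sum_range (fun n : ℕ => mcoef ν ((i:ℤ) - (n:ℤ)) * Zext N ((n:ℤ)+1) ν)]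
    apply Finset.sum_congr rfl
    intro n _
    simp only [Function.Embedding.coeFn_mk]
    rw [show ((i:ℤ)+1 - ((n:ℤ)+1)) = (i:ℤ) - (n:ℤ) by ring]
  rw [step1]
  -- extend the interval
  have step2 : ∑ t ∈ Finset.Icc (1:ℤ) (N:ℤ), mcoef ν ((i:ℤ)+1 - t) * Zext N t ν
      = ∑ t ∈ Finset.Icc (-1:ℤ) ((N:ℤ)+2), mcoef ν ((i:ℤ)+1 - t) * Zext N t ν := by
    apply Finset.sum_subset (Finset.Icc_subset_Icc (by omega) (by omega))
    intro t ht hnt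
    simp only [Finset.mem_Icc] at ht hnt
    have : t = -1 ∨ t = 0 ∨ t = (N:ℤ)+1 ∨ t = (N:ℤ)+2 := by omega
    rw [hZv t this, mul_zero]
  rw [step2]
  -- restrict to the window around i
  have hi : (i : ℕ) < N := i.isLt
  have step3 : ∑ t ∈ Finset.Icc (-1:ℤ) ((N:ℤ)+2), mcoef ν ((i:ℤ)+1 - t) * Zext N t ν
      = ∑ t ∈ Finset.Icc ((i:ℤ)-1) ((i:ℤ)+3), mcoef ν ((i:ℤ)+1 - t) * Zext N t ν := by
    symm
    apply Finset.sum_subset (Finset.Icc_subset_Icc (by omega) (by omega))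
    intro t ht hnt
    simp only [Finset.mem_Icc] at ht hnt
    have h0 : ((i:ℤ)+1 - t) ≠ 0 := by omega
    have h1 : ((i:ℤ)+1 - t).natAbs ≠ 1 := by omega
    have h2 : ((i:ℤ)+1 - t).natAbs ≠ 2 := by omega
    simp [mcoef, h0, h1, h2]
  rw [step3]
  have hset : Finset.Icc ((i:ℤ)-1) ((i:ℤ)+3)
      = {(i:ℤ)-1, (i:ℤ), (i:ℤ)+1, (i:ℤ)+2, (i:ℤ)+3} := by
    ext t
    simp only [Finset.mem_Icc, Finset.mem_insert, Finset.mem_singleton]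
    omega
  rw [hset, Finset.sum_insert (by simp only [Finset.mem_insert, Finset.mem_singleton]; push_neg; omega), Finset.sum_insert (by simp only [Finset.mem_insert, Finset.mem_singleton]; push_neg; omega),
    Finset.sum_insert (by simp only [Finset.mem_insert, Finset.mem_singleton]; push_neg; omega), Finset.sum_insert (by simp only [Finset.mem_insert, Finset.mem_singleton]; push_neg; omega),
    Finset.sum_singleton]
  rw [show ((i:ℤ)+1 - ((i:ℤ)-1)) = 2 by ring, show ((i:ℤ)+1 - (i:ℤ)) = 1 by ring,
    show ((i:ℤ)+1 - ((i:ℤ)+1)) = 0 by ring, show ((i:ℤ)+1 - ((i:ℤ)+2)) = -1 by ring,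
    show ((i:ℤ)+1 - ((i:ℤ)+3)) = -2 by ring]
  have m2 : mcoef ν 2 = 1/2 := by norm_num [mcoef]
  have m1 : mcoef ν 1 = 2*ν^2 := by norm_num [mcoef]; ring
  have m0 : mcoef ν 0 = 4*ν^2 - 1 := by norm_num [mcoef]
  have mm1 : mcoef ν (-1) = 2*ν^2 := by norm_num [mcoef]; ring
  have mm2 : mcoef ν (-2) = 1/2 := by norm_num [mcoef]
  rw [m2, m1, m0, mm1, mm2]
  have R0 := rowZero N ((i:ℤ)+1) ν
  rw [show ((i:ℤ)+1-2) = (i:ℤ)-1 by ring, show ((i:ℤ)+1-1) = (i:ℤ) by ring,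
    show ((i:ℤ)+1+1) = (i:ℤ)+2 by ring, show ((i:ℤ)+1+2) = (i:ℤ)+3 by ring] at R0
  linear_combination R0
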